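/- (Marginal price relation, charge–charge pair.) Let T ≥ 1 be a horizon, C : {1,…,T} → ℝ prices, S^end ∈ ℝ, and let x* = (p^{C*}, p^{D*}, s*) ∈ X(S^end) be an optimal schedule of F(T, C, S^end). Suppose t₁ < t₂ are in {1,…,T} with p^{C*}_{t₁} > 0, p^{D*}_{t₂} = 0, p^{C*}_{t₂} < P̄^C, and s*_t > S̲ for all t ∈ {t₁,…,t₂−1}. Then C_{t₁} ≤ ρ^{t₂−t₁} C_{t₂}. -/
import Mathlib


open Finset

/-- Parameters of the energy storage system. -/
structure Params where
  Δt : ℝ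
  ρ : ℝ
  ηC : ℝ
  ηD : ℝ
  PC : ℝ
  PD : ℝ
  Slo : ℝ
  Shi : ℝ
  Sinit : ℝ

/-- Validity of the parameters: Δt > 0, ρ ∈ (0,1], ηC, ηD ∈ (0,1],
P̄^C > 0, P̄^D > 0, S̲ ≤ S̄, S̲ ≤ S^init ≤ S̄. -/
def Params.Valid (P : Params) : Prop :=
  0 < P.Δt ∧ 0 < P.ρ ∧ P.ρ ≤ 1 ∧ 0 < P.ηC ∧ P.ηC ≤ 1 ∧ 0 < P.ηD ∧ P.ηD ≤ 1 ∧
  0 < P.PC ∧ 0 < P.PD ∧ P.Slo ≤ P.Shi ∧ P.Slo ≤ P.Sinit ∧ P.Sinit ≤ P.Shi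

/-- A feasible schedule over the horizon {1,…,T}, with the convention s 0 = S^init. -/
def Feasible (P : Params) (T : ℕ) (pC pD s : ℕ → ℝ) : Prop :=
  s 0 = P.Sinit ∧
  ∀ t : ℕ, 1 ≤ t → t ≤ T →
    (s t = P.ρ * s (t - 1) + P.Δt * (P.ηC * pC t - pD t / P.ηD) ∧
     P.Slo ≤ s t ∧ s t ≤ P.Shi ∧
     0 ≤ pC t ∧ pC t ≤ P.PC ∧
     0 ≤ pD t ∧ pD t ≤ P.PD ∧
     pC t * pD t = 0)

/-- Profit Z = Σ_{t=1}^{T} Δt C_t (p^D_t − p^C_t). -/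
noncomputable def profit (P : Params) (T : ℕ) (C pC pD : ℕ → ℝ) : ℝ :=
  ∑ t ∈ Finset.Icc 1 T, P.Δt * C t * (pD t - pC t)

/-- Optimal schedule of F(T, C, S^end): feasible, meets the terminal constraint
s_T = S^end, and maximizes profit among such schedules. -/
def Optimal (P : Params) (T : ℕ) (C : ℕ → ℝ) (Send : ℝ) (pC pD s : ℕ → ℝ) : Prop :=
  Feasible P T pC pD s ∧ s T = Send ∧
  ∀ qC qD r : ℕ → ℝ, Feasible P T qC qD r → r T = Send →
    profit P T C qC qD ≤ profit P T C pC pD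

/-- Minimum reachable level S̲_T at the end of the planning horizon. -/
noncomputable def SloT (P : Params) (T : ℕ) : ℝ :=
  max P.Slo (P.ρ ^ T * P.Sinit - P.Δt * (P.PD / P.ηD) * ∑ t ∈ Finset.range T, P.ρ ^ t)

/-- Maximum reachable level S̄_T at the end of the planning horizon. -/
noncomputable def ShiT (P : Params) (T : ℕ) : ℝ :=
  min P.Shi (P.ρ ^ T * P.Sinit + P.Δt * P.ηC * P.PC * ∑ t ∈ Finset.range T, P.ρ ^ t)

set_option maxHeartbeats 1000000 in
/-- Marginal price relation (charge–charge pair): if an optimal schedule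
charges at t₁, does not discharge at t₂ > t₁ and has slack charge capacity
there, with the state of energy strictly above S̲ on {t₁,…,t₂−1}, then
C_{t₁} ≤ ρ^{t₂−t₁} C_{t₂}. -/
theorem marginal_charge_charge (P : Params) (hP : P.Valid) (T : ℕ) (hT : 1 ≤ T)
    (C : ℕ → ℝ) (Send : ℝ) (pC pD s : ℕ → ℝ) (hx : Optimal P T C Send pC pD s)
    (t₁ t₂ : ℕ) (ht₁ : 1 ≤ t₁) (h12 : t₁ < t₂) (ht₂ : t₂ ≤ T)
    (hc : 0 < pC t₁) (hd : pD t₂ = 0) (hslack : pC t₂ < P.PC)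
    (hs : ∀ t : ℕ, t₁ ≤ t → t ≤ t₂ - 1 → P.Slo < s t) :
    C t₁ ≤ P.ρ ^ (t₂ - t₁) * C t₂ := by
  obtain ⟨hΔt, hρ, hρ1, hηC, hηC1, hηD, hηD1, hPC, hPD, hSlohi, hSi1, hSi2⟩ := hP
  obtain ⟨⟨hs0, hfeas⟩, hsT, hopt⟩ := hx
  have ht₂1 : 1 ≤ t₂ := le_trans ht₁ h12.le
  have ht₁T : t₁ ≤ T := le_trans h12.le ht₂
  obtain ⟨hdyn1, hslo1, hshi1, hpC1nn, hpC1le, hpD1nn, hpD1le, hcomp1⟩ := hfeas t₁ ht₁ ht₁T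
  obtain ⟨hdyn2, hslo2, hshi2, hpC2nn, hpC2le, hpD2nn, hpD2le, hcomp2⟩ := hfeas t₂ ht₂1 ht₂
  have hpD1 : pD t₁ = 0 := by
    rcases mul_eq_zero.1 hcomp1 with h | h
    · exact absurd h (ne_of_gt hc)
    · exact h
  set k := t₂ - t₁ with hk
  have hρk : 0 < P.ρ ^ k := pow_pos hρ k
  have hρk1 : P.ρ ^ k ≤ 1 := pow_le_one₀ hρ.le hρ1
  have hne : (Finset.Icc t₁ (t₂ - 1)).Nonempty := ⟨t₁, by simp [Finset.mem_Icc]; omega⟩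
  obtain ⟨m, hm0, hmle⟩ : ∃ m : ℝ, 0 < m ∧ ∀ t ∈ Finset.Icc t₁ (t₂ - 1), m ≤ s t - P.Slo := by
    refine ⟨(Finset.Icc t₁ (t₂ - 1)).inf' hne (fun t => s t - P.Slo), ?_,
      fun t ht => Finset.inf'_le _ ht⟩
    rw [Finset.lt_inf'_iff]
    intro b hb
    simp only [Finset.mem_Icc] at hb
    have := hs b hb.1 hb.2
    linarith
  have hΔη : 0 < P.Δt * P.ηC := mul_pos hΔt hηC
  obtain ⟨ε, hε0, hε1, hε2, hε3⟩ : ∃ ε : ℝ, 0 < ε ∧ ε ≤ pC t₁ ∧ ε ≤ P.PC - pC t₂ ∧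
      P.Δt * P.ηC * ε ≤ m := by
    refine ⟨min (min (pC t₁) (P.PC - pC t₂)) (m / (P.Δt * P.ηC)),
      lt_min (lt_min hc (by linarith)) (div_pos hm0 hΔη),
      le_trans (min_le_left _ _) (min_le_left _ _),
      le_trans (min_le_left _ _) (min_le_right _ _), ?_⟩
    have := (le_div_iff₀ hΔη).mp (min_le_right (min (pC t₁) (P.PC - pC t₂)) (m / (P.Δt * P.ηC)))
    linarith
  have hεs : ∀ t, t₁ ≤ t → t < t₂ → P.Δt * P.ηC * ε * P.ρ ^ (t - t₁) ≤ s t - P.Slo := by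
    intro t h1 h2
    have hmem : t ∈ Finset.Icc t₁ (t₂ - 1) := by simp [Finset.mem_Icc]; omega
    have h3 : m ≤ s t - P.Slo := hmle t hmem
    have h4 : P.ρ ^ (t - t₁) ≤ 1 := pow_le_one₀ hρ.le hρ1
    have h5 : 0 ≤ P.Δt * P.ηC * ε := by positivity
    nlinarith [mul_le_mul_of_nonneg_left h4 h5]
  have hεnn : ∀ j : ℕ, 0 ≤ P.Δt * P.ηC * ε * P.ρ ^ j := by
    intro j; positivity
  obtain ⟨qC, hq1, hq2, hq0⟩ : ∃ qC : ℕ → ℝ, qC t₁ = pC t₁ - ε ∧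
      qC t₂ = pC t₂ + P.ρ ^ k * ε ∧ ∀ t, t ≠ t₁ → t ≠ t₂ → qC t = pC t :=
    ⟨fun t => if t = t₁ then pC t₁ - ε else if t = t₂ then pC t₂ + P.ρ ^ k * ε else pC t,
     by simp, by simp [h12.ne'], fun t h1 h2 => by simp [h1, h2]⟩
  obtain ⟨r, hr0, hr1⟩ : ∃ r : ℕ → ℝ, (∀ t, t < t₁ ∨ t₂ ≤ t → r t = s t) ∧
      (∀ t, t₁ ≤ t → t < t₂ → r t = s t - P.Δt * P.ηC * ε * P.ρ ^ (t - t₁)) :=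
    ⟨fun t => if t₁ ≤ t ∧ t < t₂ then s t - P.Δt * P.ηC * ε * P.ρ ^ (t - t₁) else s t,
     fun t h => by dsimp only; rw [if_neg (by omega)],
     fun t h1 h2 => by dsimp only; rw [if_pos ⟨h1, h2⟩]⟩
  have hfeasq : Feasible P T qC pD r := by
    refine ⟨by rw [hr0 0 (Or.inl (by omega))]; exact hs0, ?_⟩
    intro t h1t htT
    obtain ⟨hdyn, hslo, hshi, hnn, hle, hdnn, hdle, hco⟩ := hfeas t h1t htT
    by_cases hA : t < t₁
    · rw [hq0 t (by omega) (by omega), hr0 t (Or.inl hA), hr0 (t - 1) (Or.inl (by omega))]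
      exact ⟨hdyn, hslo, hshi, hnn, hle, hdnn, hdle, hco⟩
    by_cases hB : t = t₁
    · subst hB
      rw [hq1, hr1 t le_rfl h12, hr0 (t - 1) (Or.inl (by omega)), Nat.sub_self, pow_zero]
      have h4 := hεs t le_rfl h12
      rw [Nat.sub_self, pow_zero] at h4
      refine ⟨by linear_combination hdyn, by linarith, ?_, by linarith, by linarith, hdnn,
        hdle, by rw [hpD1]; ring⟩
      have := hεnn 0
      rw [pow_zero] at this
      linarith
    by_cases hC : t < t₂
    · have hsub : t - t₁ = (t - 1 - t₁) + 1 := by omega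
      rw [hq0 t hB (by omega), hr1 t (by omega) hC, hr1 (t - 1) (by omega) (by omega),
        hsub, pow_succ]
      have h4 := hεs t (by omega) hC
      rw [hsub, pow_succ] at h4
      have h5 := hεnn (t - 1 - t₁ + 1)
      rw [pow_succ] at h5
      exact ⟨by linear_combination hdyn, by linarith, by linarith, hnn, hle, hdnn, hdle, hco⟩
    by_cases hD : t = t₂
    · subst hD
      have hsub : k = (t - 1 - t₁) + 1 := by omega
      rw [hq2, hr0 t (Or.inr le_rfl), hr1 (t - 1) (by omega) (by omega), hsub, pow_succ]
      have h6 : P.ρ ^ (t - 1 - t₁) * P.ρ * ε ≤ 1 * ε := by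
        have : P.ρ ^ (t - 1 - t₁) * P.ρ = P.ρ ^ k := by rw [hsub, pow_succ]
        rw [this]
        exact mul_le_mul_of_nonneg_right hρk1 hε0.le
      have h7 : 0 ≤ P.ρ ^ (t - 1 - t₁) * P.ρ * ε := by positivity
      refine ⟨by linear_combination hdyn, hslo, hshi, by linarith, by linarith, hdnn, hdle,
        by rw [hd]; ring⟩
    · rw [hq0 t hB hD, hr0 t (Or.inr (by omega)), hr0 (t - 1) (Or.inr (by omega))]
      exact ⟨hdyn, hslo, hshi, hnn, hle, hdnn, hdle, hco⟩
  have hrT : r T = Send := by rw [hr0 T (Or.inr ht₂)]; exact hsT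
  have hle := hopt qC pD r hfeasq hrT
  have hdiff : profit P T C pC pD - profit P T C qC pD =
      P.Δt * C t₂ * (P.ρ ^ k * ε) - P.Δt * C t₁ * ε := by
    unfold profit
    rw [← Finset.sum_sub_distrib]
    have hcong : ∀ t ∈ Finset.Icc 1 T,
        P.Δt * C t * (pD t - pC t) - P.Δt * C t * (pD t - qC t) =
        (if t = t₁ then -(P.Δt * C t₁ * ε) else 0) +
        (if t = t₂ then P.Δt * C t₂ * (P.ρ ^ k * ε) else 0) := by
      intro t ht
      by_cases h1 : t = t₁
      · subst h1; rw [hq1, if_pos rfl, if_neg (by omega)]; ring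
      by_cases h2 : t = t₂
      · subst h2; rw [hq2, if_neg h1, if_pos rfl]; ring
      · rw [hq0 t h1 h2, if_neg h1, if_neg h2]; ring
    rw [Finset.sum_congr rfl hcong, Finset.sum_add_distrib,
      Finset.sum_ite_eq' _ t₁ (fun _ => -(P.Δt * C t₁ * ε)),
      Finset.sum_ite_eq' _ t₂ (fun _ => P.Δt * C t₂ * (P.ρ ^ k * ε))]
    have hmem1 : t₁ ∈ Finset.Icc 1 T := Finset.mem_Icc.2 ⟨ht₁, ht₁T⟩
    have hmem2 : t₂ ∈ Finset.Icc 1 T := Finset.mem_Icc.2 ⟨ht₂1, ht₂⟩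
    rw [if_pos hmem1, if_pos hmem2]
    ring
  have hfin : 0 ≤ P.Δt * C t₂ * (P.ρ ^ k * ε) - P.Δt * C t₁ * ε := by linarith
  nlinarith [hfin, mul_pos hΔt hε0]
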